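/- arXiv:1805.04219 — 3 statements merged into one kernel-verified Lean document; each statement's English description precedes it below -/
import Mathlib

section
/- Let n ≥ 1 and let M be a set with at least two elements equipped with n strict linear orders <₁,…,<ₙ, and suppose M is ultrahomogeneous. Then the following are equivalent: (1) every finite set equipped with n strict linear orders embeds into M; (2) whenever for each i ∈ {1,…,n} a nonempty subset Iᵢ ⊆ M is chosen that is an open interval of <ᵢ — that is, of one of the forms {z : a <ᵢ z and z <ᵢ b}, {z : a <ᵢ z}, {z : z <ᵢ b} for some a, b ∈ M, or all of M — the intersection of the Iᵢ over all i is nonempty. -/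
/-- Ultrahomogeneity for a set with a family of strict linear orders. -/
def Ultrahomog {n : ℕ} {M : Type*} (lt : Fin n → M → M → Prop) : Prop :=
  ∀ s : Set M, s.Finite → ∀ f : M → M,
    (∀ x ∈ s, ∀ y ∈ s, ∀ i, lt i x y ↔ lt i (f x) (f y)) →
    ∃ g : M ≃ M, (∀ x y i, lt i x y ↔ lt i (g x) (g y)) ∧ ∀ x ∈ s, g x = f x

/-- `I` is an open interval of the strict linear order `lt`. -/
def IsOpenInterval {M : Type*} (lt : M → M → Prop) (I : Set M) : Prop :=
  (∃ a b, I = {z | lt a z ∧ lt z b}) ∨ (∃ a, I = {z | lt a z}) ∨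
  (∃ b, I = {z | lt z b}) ∨ I = Set.univ

section Stmt17Helpers

lemma rtotal' {M : Type*} {r : M → M → Prop} (h : IsStrictTotalOrder M r) {a b : M}
    (hne : a ≠ b) (h1 : ¬ r a b) : r b a := by
  rcases (haveI := h; trichotomous_of r a b) with h' | h' | h' <;> tauto

lemma rasymm' {M : Type*} {r : M → M → Prop} (h : IsStrictTotalOrder M r) {a b : M}
    (h1 : r a b) : ¬ r b a := fun h2 => h.irrefl a (h.trans a b a h1 h2)

lemma sto_flip' {M : Type*} {r : M → M → Prop} (h : IsStrictTotalOrder M r) :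
    IsStrictTotalOrder M (fun x y => r y x) :=
  { trichotomous := fun a b => by
      intro h1 h2
      exact h.trichotomous a b h2 h1
    irrefl := h.irrefl
    trans := fun a b c h1 h2 => h.trans c b a h2 h1 }

lemma finset_max' {A : Type*} {r : A → A → Prop} (h : IsStrictTotalOrder A r)
    (s : Finset A) (hs : s.Nonempty) : ∃ m ∈ s, ∀ x ∈ s, x ≠ m → r x m := by
  classical
  revert hs
  induction s using Finset.induction_on with
  | empty => intro hs; exact absurd hs (by simp)
  | @insert a s ha ih =>
    intro _
    rcases s.eq_empty_or_nonempty with rfl | hs'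
    · exact ⟨a, by simp, by simp⟩
    · obtain ⟨m, hm, hmax⟩ := ih hs'
      rcases (haveI := h; trichotomous_of r a m) with h' | rfl | h'
      · refine ⟨m, Finset.mem_insert_of_mem hm, ?_⟩
        intro x hx hxm
        rcases Finset.mem_insert.1 hx with rfl | hx
        · exact h'
        · exact hmax x hx hxm
      · exact absurd hm ha
      · refine ⟨a, Finset.mem_insert_self a s, ?_⟩
        intro x hx hxa
        rcases Finset.mem_insert.1 hx with rfl | hx
        · exact absurd rfl hxa
        · by_cases hxm : x = m
          · exact hxm ▸ h'
          · exact h.trans x m a (hmax x hx hxm) h'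

lemma interval_cut {M : Type*} {r : M → M → Prop} (h : IsStrictTotalOrder M r)
    {I : Set M} (hI : IsOpenInterval r I) (hne : I.Nonempty) :
    ∃ (c : M → Prop) (E : Set M), E.Finite ∧
      (∀ u v, r u v → c v → c u) ∧
      (∀ m, m ∉ E → (∀ s ∈ E, c s ↔ r s m) → m ∈ I) := by
  rcases hI with ⟨a, b, rfl⟩ | ⟨a, rfl⟩ | ⟨b, rfl⟩ | rfl
  · refine ⟨fun u => ¬ r a u, {a, b}, (Set.finite_singleton b).insert a, ?_, ?_⟩
    · intro u v huv hv hau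
      exact hv (h.trans a u v hau huv)
    · intro m hm hc
      obtain ⟨z, hz1, hz2⟩ := hne
      have hab : r a b := h.trans a z b hz1 hz2
      have h1 : r a m := by
        have := (hc a (by simp)).1
        by_contra hcon
        exact hcon (this (h.irrefl a))
      have h2 : ¬ r b m := fun hbm => ((hc b (by simp)).2 hbm) hab
      have hmb : m ≠ b := fun he => hm (by simp [he])
      exact ⟨h1, rtotal' h (fun he => hmb he.symm) h2⟩
  · refine ⟨fun u => ¬ r a u, {a}, Set.finite_singleton a, ?_, ?_⟩
    · intro u v huv hv hau
      exact hv (h.trans a u v hau huv)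
    · intro m hm hc
      have := (hc a (by simp)).1
      by_contra hcon
      exact hcon (this (h.irrefl a))
  · refine ⟨fun u => r u b, {b}, Set.finite_singleton b, ?_, ?_⟩
    · intro u v huv hv
      exact h.trans u v b huv hv
    · intro m hm hc
      have h2 : ¬ r b m := fun hbm => h.irrefl b ((hc b (by simp)).2 hbm)
      have hmb : m ≠ b := fun he => hm (by simp [he])
      exact rtotal' h (fun he => hmb he.symm) h2
  · exact ⟨fun _ => False, ∅, Set.finite_empty, fun _ _ _ hv => hv, fun m _ _ => trivial⟩

end Stmt17Helpers

/-- an ultrahomogeneous `n`-dimensional permutation structure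
with at least two elements is generic (every finite `n`-dimensional
permutation structure embeds into it) iff every choice of one nonempty open
interval for each of the `n` orders has nonempty intersection. -/
theorem stmt_17 {n : ℕ} (hn : 1 ≤ n) {M : Type*} (hM : ∃ x y : M, x ≠ y)
    (lt : Fin n → M → M → Prop)
    (hlt : ∀ i, IsStrictTotalOrder M (lt i))
    (hhom : Ultrahomog lt) :
    (∀ (A : Type) [Fintype A],
      ∀ la : Fin n → A → A → Prop, (∀ i, IsStrictTotalOrder A (la i)) →
        ∃ f : A → M, ∀ x y i, la i x y ↔ lt i (f x) (f y)) ↔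
    (∀ I : Fin n → Set M,
      (∀ i, IsOpenInterval (lt i) (I i) ∧ (I i).Nonempty) →
      (⋂ i, I i).Nonempty) := by
  constructor
  · intro hgen
    classical
    intro I hI
    choose c E hEfin hdc hkey using fun i => interval_cut (hlt i) (hI i).1 (hI i).2
    set S : Set M := ⋃ i, E i with hS
    have hSfin : S.Finite := Set.finite_iUnion hEfin
    haveI : Fintype ↥S := hSfin.fintype
    set k := Fintype.card ↥S with hk
    set e : Fin k ≃ ↥S := (Fintype.equivFin ↥S).symm with he
    set la : Fin n → Option (Fin k) → Option (Fin k) → Prop := fun i x y =>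
      match x, y with
      | some j, some j' => lt i (e j) (e j')
      | some j, none => c i (e j)
      | none, some j => ¬ c i (e j)
      | none, none => False with hla_def
    have einj : ∀ j j' : Fin k, (e j : M) = (e j' : M) → j = j' :=
      fun j j' hjj => e.injective (Subtype.ext hjj)
    have hla : ∀ i, IsStrictTotalOrder (Option (Fin k)) (la i) := by
      intro i
      refine { trichotomous := ?_, irrefl := ?_, trans := ?_ }
      · rintro (_ | j) (_ | j')
        · exact fun _ _ => rfl
        · by_cases hc : c i (e j')
          · exact fun _ h2 => absurd hc h2
          · exact fun h1 _ => absurd hc h1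
        · by_cases hc : c i (e j)
          · exact fun h1 _ => absurd hc h1
          · exact fun _ h2 => absurd hc h2
        · rcases (haveI := hlt i; trichotomous_of (lt i) (e j) (e j')) with h' | h' | h'
          · exact fun h1 _ => absurd h' h1
          · exact fun _ _ => congrArg some (einj j j' h')
          · exact fun _ h2 => absurd h' h2
      · rintro (_ | j)
        · exact fun hf => hf
        · exact (hlt i).irrefl (e j)
      · rintro (_ | j) (_ | j') (_ | j'') h1 h2
        · exact h1.elim
        · exact h1.elim
        · exact absurd h2 h1
        · exact fun hc => h1 (hdc i _ _ h2 hc)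
        · exact h2.elim
        · rcases (haveI := hlt i; trichotomous_of (lt i) (e j) (e j'')) with h' | h' | h'
          · exact h'
          · exact absurd ((einj _ _ h') ▸ h1) h2
          · exact absurd (hdc i _ _ h' h1) h2
        · exact hdc i _ _ h1 h2
        · exact (hlt i).trans _ _ _ h1 h2
    obtain ⟨f, hf⟩ := hgen (Option (Fin k)) la hla
    set i0 : Fin n := ⟨0, hn⟩ with hi0
    have hfne : ∀ j : Fin k, f none ≠ f (some j) := by
      intro j heq
      by_cases hc : c i0 (e j)
      · have : la i0 (some j) none := hc
        have := (hf (some j) none i0).1 this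
        rw [heq] at this
        exact (hlt i0).irrefl _ this
      · have : la i0 none (some j) := hc
        have := (hf none (some j) i0).1 this
        rw [heq] at this
        exact (hlt i0).irrefl _ this
    have hfinj : ∀ j j' : Fin k, f (some j) = f (some j') → j = j' := by
      intro j j' heq
      by_contra hjj
      have hne' : (e j : M) ≠ (e j' : M) := fun h => hjj (einj j j' h)
      rcases (haveI := hlt i0; trichotomous_of (lt i0) (e j) (e j')) with h' | h' | h'
      · have : la i0 (some j) (some j') := h'
        have := (hf (some j) (some j') i0).1 this
        rw [heq] at this
        exact (hlt i0).irrefl _ this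
      · exact hne' h'
      · have : la i0 (some j') (some j) := h'
        have := (hf (some j') (some j) i0).1 this
        rw [heq] at this
        exact (hlt i0).irrefl _ this
    set s : Set M := Set.range (fun j : Fin k => f (some j)) with hs
    have hsfin : s.Finite := Set.finite_range _
    set hmap : M → M := fun m =>
      if hm : ∃ j : Fin k, f (some j) = m then ((e (Classical.choose hm) : ↥S) : M) else m
      with hmap_def
    have hval : ∀ j : Fin k, hmap (f (some j)) = (e j : M) := by
      intro j
      have hex : ∃ j' : Fin k, f (some j') = f (some j) := ⟨j, rfl⟩
      rw [hmap_def]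
      simp only [dif_pos hex]
      exact congrArg _ (congrArg _ (hfinj _ _ (Classical.choose_spec hex)))
    have hcond : ∀ x ∈ s, ∀ y ∈ s, ∀ i, lt i x y ↔ lt i (hmap x) (hmap y) := by
      rintro x ⟨j, rfl⟩ y ⟨j', rfl⟩ i
      rw [hval j, hval j']
      exact Iff.symm (hf (some j) (some j') i)
    obtain ⟨g, hg, hgs⟩ := hhom s hsfin hmap hcond
    refine ⟨g (f none), Set.mem_iInter.2 ?_⟩
    intro i
    have hES : E i ⊆ S := Set.subset_iUnion E i
    refine hkey i (g (f none)) ?_ ?_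
    · intro hmem
      set σ : ↥S := ⟨g (f none), hES hmem⟩ with hσ
      set j := e.symm σ with hj
      have hej : (e j : M) = g (f none) := by rw [hj]; simp [hσ]
      have : g (f (some j)) = g (f none) := by
        rw [hgs (f (some j)) ⟨j, rfl⟩, hval j, hej]
      exact hfne j (g.injective this).symm
    · intro s' hs'
      set σ : ↥S := ⟨s', hES hs'⟩ with hσ
      set j := e.symm σ with hj
      have hej : (e j : M) = s' := by rw [hj]; simp [hσ]
      have hgj : g (f (some j)) = (e j : M) := by
        rw [hgs (f (some j)) ⟨j, rfl⟩, hval j]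
      have h1 : c i (e j) ↔ lt i (f (some j)) (f none) := hf (some j) none i
      have h2 : lt i (f (some j)) (f none) ↔ lt i (g (f (some j))) (g (f none)) :=
        hg (f (some j)) (f none) i
      have h3 := h1.trans h2
      rw [hgj, hej] at h3
      exact h3
  · intro hint
    classical
    -- unboundedness
    have swap_aux : ∀ a b : M, a ≠ b → ∃ g : M ≃ M,
        (∀ x y i, lt i x y ↔ lt i (g x) (g y)) ∧ g b = a := by
      intro a b hab
      have hcond : ∀ x ∈ ({b} : Set M), ∀ y ∈ ({b} : Set M), ∀ i,
          lt i x y ↔ lt i ((fun _ => a) x) ((fun _ => a) y) := by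
        intro x hx y hy i
        have hx' : x = b := hx
        have hy' : y = b := hy
        rw [hx', hy']
        constructor
        · exact fun h => absurd h ((hlt i).irrefl b)
        · exact fun h => absurd h ((hlt i).irrefl a)
      obtain ⟨g, hg, hgs⟩ := hhom {b} (Set.finite_singleton b) (fun _ => a) hcond
      exact ⟨g, hg, hgs b rfl⟩
    have no_max : ∀ (i : Fin n) (a : M), ∃ z, lt i a z := by
      intro i a
      obtain ⟨x, y, hxy⟩ := hM
      have hb : ∃ b : M, b ≠ a := by
        by_cases hx : x = a
        · exact ⟨y, fun h => hxy (hx.trans h.symm)⟩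
        · exact ⟨x, hx⟩
      obtain ⟨b, hb⟩ := hb
      by_cases hab : lt i a b
      · exact ⟨b, hab⟩
      · have hba : lt i b a := rtotal' (hlt i) (Ne.symm hb) hab
        obtain ⟨g, hg, hgb⟩ := swap_aux a b hb.symm
        refine ⟨g a, ?_⟩
        have := (hg b a i).1 hba
        rwa [hgb] at this
    have no_min : ∀ (i : Fin n) (a : M), ∃ z, lt i z a := by
      intro i a
      obtain ⟨x, y, hxy⟩ := hM
      have hb : ∃ b : M, b ≠ a := by
        by_cases hx : x = a
        · exact ⟨y, fun h => hxy (hx.trans h.symm)⟩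
        · exact ⟨x, hx⟩
      obtain ⟨b, hb⟩ := hb
      by_cases hba : lt i b a
      · exact ⟨b, hba⟩
      · have hab : lt i a b := rtotal' (hlt i) hb hba
        obtain ⟨g, hg, hgb⟩ := swap_aux a b hb.symm
        refine ⟨g a, ?_⟩
        have := (hg a b i).1 hab
        rwa [hgb] at this
    -- density
    have dense : ∀ (i : Fin n) (a b : M), lt i a b → ∃ z, lt i a z ∧ lt i z b := by
      intro i a b hab
      have hne : a ≠ b := fun h => (hlt i).irrefl a (h ▸ hab)
      set J : Fin n → Set M := fun j =>
        if j = i then {z | lt i b z}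
        else if lt j a b then {z | lt j a z} else {z | lt j z a} with hJ
      have hJgood : ∀ j, IsOpenInterval (lt j) (J j) ∧ (J j).Nonempty := by
        intro j
        by_cases hji : j = i
        · subst hji
          constructor
          · exact Or.inr (Or.inl ⟨b, by simp [hJ]⟩)
          · obtain ⟨z, hz⟩ := no_max j b
            exact ⟨z, by simp [hJ, hz]⟩
        · by_cases hjab : lt j a b
          · constructor
            · exact Or.inr (Or.inl ⟨a, by simp [hJ, hji, hjab]⟩)
            · exact ⟨b, by simp [hJ, hji, hjab]⟩
          · have hjba : lt j b a := rtotal' (hlt j) hne hjab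
            constructor
            · exact Or.inr (Or.inr (Or.inl ⟨a, by simp [hJ, hji, hjab]⟩))
            · exact ⟨b, by simp [hJ, hji, hjab, hjba]⟩
      obtain ⟨z, hz⟩ := hint J hJgood
      have hzJ : ∀ j, z ∈ J j := Set.mem_iInter.1 hz
      have hzi : lt i b z := by have := hzJ i; simpa [hJ] using this
      have hzj : ∀ j, j ≠ i → ((lt j a b → lt j a z) ∧ (¬ lt j a b → lt j z a)) := by
        intro j hji
        have := hzJ j
        by_cases hjab : lt j a b
        · simp only [hJ, if_neg hji, if_pos hjab] at this
          exact ⟨fun _ => this, fun hc => absurd hjab hc⟩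
        · simp only [hJ, if_neg hji, if_neg hjab] at this
          exact ⟨fun hc => absurd hc hjab, fun _ => this⟩
      -- the partial map sending b to z, fixing a
      set fm : M → M := fun w => if w = b then z else w with hfm
      have hfa : fm a = a := by simp [hfm, hne]
      have hfb : fm b = z := by simp [hfm]
      have hcond : ∀ x ∈ ({a, b} : Set M), ∀ y ∈ ({a, b} : Set M), ∀ j,
          lt j x y ↔ lt j (fm x) (fm y) := by
        have haz : ∀ j, lt j a b ↔ lt j a z := by
          intro j
          by_cases hji : j = i
          · subst hji
            exact ⟨fun _ => (hlt j).trans a b z hab hzi, fun _ => hab⟩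
          · constructor
            · exact fun h => (hzj j hji).1 h
            · intro h
              by_contra hc
              exact rasymm' (hlt j) ((hzj j hji).2 hc) h
        have hza : ∀ j, lt j b a ↔ lt j z a := by
          intro j
          by_cases hji : j = i
          · subst hji
            constructor
            · exact fun h => absurd hab (rasymm' (hlt j) h)
            · intro h
              exact (hlt j).trans b z a hzi h
          · constructor
            · intro h
              exact (hzj j hji).2 (rasymm' (hlt j) h)
            · intro h
              by_contra hc
              have hjab : lt j a b := rtotal' (hlt j) (Ne.symm hne) hc
              exact rasymm' (hlt j) ((hzj j hji).1 hjab) h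
        intro x hx y hy j
        have hx' : x = a ∨ x = b := by simpa using hx
        have hy' : y = a ∨ y = b := by simpa using hy
        rcases hx' with h | h <;> rcases hy' with h' | h' <;> rw [h, h']
        · rw [hfa]
        · rw [hfa, hfb]; exact haz j
        · rw [hfa, hfb]; exact hza j
        · rw [hfb]
          constructor
          · exact fun hh => absurd hh ((hlt j).irrefl b)
          · exact fun hh => absurd hh ((hlt j).irrefl z)
      obtain ⟨g, hg, hgs⟩ := hhom {a, b} (Set.Finite.insert a (Set.finite_singleton b))
        fm hcond
      have hga : g a = a := (hgs a (by simp)).trans hfa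
      have hgb : g b = z := (hgs b (by simp)).trans hfb
      refine ⟨g.symm b, ?_, ?_⟩
      · have := (hg a (g.symm b) i).2
        rw [hga, g.apply_symm_apply] at this
        exact this hab
      · have := (hg (g.symm b) b i).2
        rw [g.apply_symm_apply, hgb] at this
        exact this hzi
    -- main construction
    intro A _ la hla
    obtain ⟨m0, -, -⟩ := hM
    have key : ∀ s : Finset A, ∃ f : A → M,
        ∀ x ∈ s, ∀ y ∈ s, ∀ i, la i x y ↔ lt i (f x) (f y) := by
      intro s
      induction s using Finset.induction_on with
      | empty => exact ⟨fun _ => m0, by simp⟩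
      | @insert p t hp ih =>
        obtain ⟨f, hf⟩ := ih
        -- for each order, find the good interval
        have hJ : ∀ i : Fin n, ∃ J : Set M, IsOpenInterval (lt i) J ∧ J.Nonempty ∧
            ∀ z ∈ J, (∀ x ∈ t, la i x p → lt i (f x) z) ∧
                     (∀ x ∈ t, la i p x → lt i z (f x)) := by
          intro i
          set B := t.filter (fun x => la i x p) with hB
          set C := t.filter (fun x => la i p x) with hC
          have hBmem : ∀ x ∈ t, la i x p → x ∈ B := by
            intro x hx hxp; simp [hB, hx, hxp]
          have hCmem : ∀ x ∈ t, la i p x → x ∈ C := by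
            intro x hx hxp; simp [hC, hx, hxp]
          by_cases hBne : B.Nonempty
          · obtain ⟨xM, hxM, hxMmax⟩ := finset_max' (hla i) B hBne
            have hxMt : xM ∈ t := (Finset.mem_filter.1 hxM).1
            have hxMp : la i xM p := (Finset.mem_filter.1 hxM).2
            have hbig : ∀ x ∈ t, la i x p → ∀ z, lt i (f xM) z → lt i (f x) z := by
              intro x hx hxp z hz
              by_cases hxm : x = xM
              · exact hxm ▸ hz
              · have := hxMmax x (hBmem x hx hxp) hxm
                have := (hf x hx xM hxMt i).1 this
                exact (hlt i).trans _ _ _ this hz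
            by_cases hCne : C.Nonempty
            · obtain ⟨xm, hxm, hxmmin⟩ := finset_max' (sto_flip' (hla i)) C hCne
              have hxmt : xm ∈ t := (Finset.mem_filter.1 hxm).1
              have hpxm : la i p xm := (Finset.mem_filter.1 hxm).2
              have hsmall : ∀ x ∈ t, la i p x → ∀ z, lt i z (f xm) → lt i z (f x) := by
                intro x hx hxp z hz
                by_cases hxm' : x = xm
                · exact hxm' ▸ hz
                · have := hxmmin x (hCmem x hx hxp) hxm'
                  have := (hf xm hxmt x hx i).1 this
                  exact (hlt i).trans _ _ _ hz this
              have hMm : lt i (f xM) (f xm) :=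
                (hf xM hxMt xm hxmt i).1 ((hla i).trans _ _ _ hxMp hpxm)
              obtain ⟨z0, hz01, hz02⟩ := dense i (f xM) (f xm) hMm
              refine ⟨{z | lt i (f xM) z ∧ lt i z (f xm)}, Or.inl ⟨f xM, f xm, rfl⟩,
                ⟨z0, hz01, hz02⟩, ?_⟩
              rintro z ⟨hz1, hz2⟩
              exact ⟨fun x hx hxp => hbig x hx hxp z hz1,
                     fun x hx hxp => hsmall x hx hxp z hz2⟩
            · obtain ⟨z0, hz0⟩ := no_max i (f xM)
              refine ⟨{z | lt i (f xM) z}, Or.inr (Or.inl ⟨f xM, rfl⟩), ⟨z0, hz0⟩, ?_⟩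
              intro z hz
              refine ⟨fun x hx hxp => hbig x hx hxp z hz, fun x hx hxp => ?_⟩
              exact absurd ⟨x, hCmem x hx hxp⟩ hCne
          · by_cases hCne : C.Nonempty
            · obtain ⟨xm, hxm, hxmmin⟩ := finset_max' (sto_flip' (hla i)) C hCne
              have hxmt : xm ∈ t := (Finset.mem_filter.1 hxm).1
              have hpxm : la i p xm := (Finset.mem_filter.1 hxm).2
              have hsmall : ∀ x ∈ t, la i p x → ∀ z, lt i z (f xm) → lt i z (f x) := by
                intro x hx hxp z hz
                by_cases hxm' : x = xm
                · exact hxm' ▸ hz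
                · have := hxmmin x (hCmem x hx hxp) hxm'
                  have := (hf xm hxmt x hx i).1 this
                  exact (hlt i).trans _ _ _ hz this
              obtain ⟨z0, hz0⟩ := no_min i (f xm)
              refine ⟨{z | lt i z (f xm)}, Or.inr (Or.inr (Or.inl ⟨f xm, rfl⟩)),
                ⟨z0, hz0⟩, ?_⟩
              intro z hz
              refine ⟨fun x hx hxp => ?_, fun x hx hxp => hsmall x hx hxp z hz⟩
              exact absurd ⟨x, hBmem x hx hxp⟩ hBne
            · refine ⟨Set.univ, Or.inr (Or.inr (Or.inr rfl)), ⟨m0, trivial⟩, ?_⟩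
              intro z _
              refine ⟨fun x hx hxp => ?_, fun x hx hxp => ?_⟩
              · exact absurd ⟨x, hBmem x hx hxp⟩ hBne
              · exact absurd ⟨x, hCmem x hx hxp⟩ hCne
        choose J hJopen hJne hJprop using hJ
        obtain ⟨z, hz⟩ := hint J (fun i => ⟨hJopen i, hJne i⟩)
        have hzJ : ∀ i, z ∈ J i := Set.mem_iInter.1 hz
        refine ⟨Function.update f p z, ?_⟩
        have hup : ∀ x ∈ t, Function.update f p z x = f x := by
          intro x hx
          have hxp : x ≠ p := by
            intro h
            rw [h] at hx
            exact hp hx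
          exact Function.update_of_ne hxp _ _
        have hupp : Function.update f p z p = z := Function.update_self _ _ _
        intro x hx y hy i
        rcases Finset.mem_insert.1 hx with h | hx' <;>
          rcases Finset.mem_insert.1 hy with h' | hy'
        · rw [h, h', hupp]
          constructor
          · exact fun hh => absurd hh ((hla i).irrefl p)
          · exact fun hh => absurd hh ((hlt i).irrefl z)
        · rw [h, hupp, hup y hy']
          constructor
          · exact fun hh => ((hJprop i z (hzJ i)).2 y hy' hh)
          · intro hh
            rcases (haveI := hla i; trichotomous_of (la i) p y) with h2 | h2 | h2
            · exact h2
            · exact absurd hy' (h2 ▸ hp)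
            · exact absurd hh (rasymm' (hlt i) ((hJprop i z (hzJ i)).1 y hy' h2))
        · rw [h', hupp, hup x hx']
          constructor
          · exact fun hh => ((hJprop i z (hzJ i)).1 x hx' hh)
          · intro hh
            rcases (haveI := hla i; trichotomous_of (la i) x p) with h2 | h2 | h2
            · exact h2
            · exact absurd hx' (by rw [h2]; exact hp)
            · exact absurd hh (rasymm' (hlt i) ((hJprop i z (hzJ i)).2 x hx' h2))
        · rw [hup x hx', hup y hy']
          exact hf x hx' y hy' i
    obtain ⟨f, hf⟩ := key Finset.univ
    exact ⟨f, fun x y i => hf x (Finset.mem_univ x) y (Finset.mem_univ y) i⟩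
end

section
/- Let M be a set equipped with 3 strict linear orders <₁, <₂, <₃ that is ultrahomogeneous. Let E and F be equivalence relations on M, each invariant under every automorphism of M (every bijection of M onto itself preserving each <ᵢ in both directions). Then E and F are comparable: E ⊆ F or F ⊆ E. -/
lemma aux_asymm {M : Type*} (lt : Fin 3 → M → M → Prop)
    (hlt : ∀ i, IsStrictTotalOrder M (lt i))
    (i : Fin 3) {a b : M} (h : lt i a b) : ¬ lt i b a := fun h2 =>
  (hlt i).irrefl a ((hlt i).trans _ _ _ h h2)

lemma aux_not_lt {M : Type*} (lt : Fin 3 → M → M → Prop)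
    (hlt : ∀ i, IsStrictTotalOrder M (lt i))
    (i : Fin 3) {a b : M} (hab : a ≠ b) (h : ¬ lt i a b) : lt i b a := by
  rcases (by haveI := hlt i; exact trichotomous_of (lt i) a b : lt i a b ∨ a = b ∨ lt i b a) with h1 | h1 | h1
  · exact absurd h1 h
  · exact absurd h1 hab
  · exact h1

/-- point transitivity -/
lemma aux_point {M : Type*} (lt : Fin 3 → M → M → Prop)
    (hlt : ∀ i, IsStrictTotalOrder M (lt i)) (hhom : Ultrahomog lt)
    (a c : M) :
    ∃ g : M ≃ M, (∀ x y i, lt i x y ↔ lt i (g x) (g y)) ∧ g a = c := by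
  obtain ⟨g, hg, hga⟩ := hhom {a} (Set.finite_singleton a) (fun _ => c)
    (by
      rintro x hx y hy i
      simp only [Set.mem_singleton_iff] at hx hy
      subst hx; subst hy
      constructor <;> (intro h; exact absurd h ((hlt i).irrefl _)))
  exact ⟨g, hg, hga a rfl⟩

/-- pair transitivity for pairs of the same type -/
lemma aux_pair {M : Type*} (lt : Fin 3 → M → M → Prop)
    (hlt : ∀ i, IsStrictTotalOrder M (lt i)) (hhom : Ultrahomog lt)
    {a b c d : M} (hab : a ≠ b) (hcd : c ≠ d)
    (h : ∀ i, lt i a b ↔ lt i c d) :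
    ∃ g : M ≃ M, (∀ x y i, lt i x y ↔ lt i (g x) (g y)) ∧ g a = c ∧ g b = d := by
  classical
  have hrev : ∀ i, lt i b a ↔ lt i d c := by
    intro i
    constructor
    · intro h1
      exact aux_not_lt lt hlt i hcd (fun h2 => aux_asymm lt hlt i h1 ((h i).mpr h2))
    · intro h1
      exact aux_not_lt lt hlt i hab (fun h2 => aux_asymm lt hlt i h1 ((h i).mp h2))
  set f : M → M := fun w => if w = a then c else d with hf
  have hfa : f a = c := by simp [hf]
  have hfb : f b = d := by simp [hf, hab.symm]
  obtain ⟨g, hg, hgs⟩ := hhom {a, b} ((Set.finite_singleton b).insert a) f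
    (by
      rintro x hx y hy i
      simp only [Set.mem_insert_iff, Set.mem_singleton_iff] at hx hy
      rcases hx with rfl | rfl <;> rcases hy with rfl | rfl
      · rw [hfa]
        constructor <;> (intro h1; exact absurd h1 ((hlt i).irrefl _))
      · rw [hfa, hfb]; exact h i
      · rw [hfa, hfb]; exact hrev i
      · rw [hfb]
        constructor <;> (intro h1; exact absurd h1 ((hlt i).irrefl _)))
  exact ⟨g, hg, by rw [hgs a (by simp), hfa], by rw [hgs b (by simp), hfb]⟩

/-- core combinatorial step -/
lemma aux_core {M : Type*} (lt : Fin 3 → M → M → Prop)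
    (hlt : ∀ i, IsStrictTotalOrder M (lt i)) (hhom : Ultrahomog lt)
    (E F : M → M → Prop) (hEe : Equivalence E) (hFe : Equivalence F)
    (hEinv : ∀ g : M ≃ M, (∀ x y i, lt i x y ↔ lt i (g x) (g y)) →
      ∀ x y, E x y ↔ E (g x) (g y))
    (hFinv : ∀ g : M ≃ M, (∀ x y i, lt i x y ↔ lt i (g x) (g y)) →
      ∀ x y, F x y ↔ F (g x) (g y))
    {x y u v : M} (hxy : x ≠ y) (huv : u ≠ v)
    (hExy : E x y) (hnFxy : ¬ F x y) (hFuv : F u v) (hnEuv : ¬ E u v)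
    (j : Fin 3) (hagree : ∀ i, i ≠ j → (lt i x y ↔ lt i u v)) : False := by
  classical
  obtain ⟨g, hg, hgu⟩ := aux_point lt hlt hhom u y
  set z := g v with hz
  have hyz : ∀ i, lt i y z ↔ lt i u v := by
    intro i
    rw [hz, ← hgu]
    exact (hg u v i).symm
  have hyzne : y ≠ z := by
    rw [hz, ← hgu]; exact fun h => huv (g.injective h)
  have hnEyz : ¬ E y z := by
    rw [hz, ← hgu]; exact fun h => hnEuv ((hEinv g hg u v).mpr h)
  have hFyz : F y z := by
    rw [hz, ← hgu]; exact (hFinv g hg u v).mp hFuv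
  -- agreement of type(x,z) with type(x,y) off j
  have hxz_agree : ∀ i, i ≠ j → (lt i x z ↔ lt i x y) := by
    intro i hi
    have hiff : lt i x y ↔ lt i y z := (hagree i hi).trans (hyz i).symm
    constructor
    · intro h1
      by_contra h2
      have h3 : lt i y x := aux_not_lt lt hlt i hxy h2
      have h4 : lt i z y := aux_not_lt lt hlt i hyzne (fun h5 => h2 (hiff.mpr h5))
      exact aux_asymm lt hlt i h1 ((hlt i).trans _ _ _ h4 h3)
    · intro h1
      exact (hlt i).trans _ _ _ h1 (hiff.mp h1)
  -- x ≠ z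
  obtain ⟨i0, hi0j⟩ := exists_ne j
  have hor : lt i0 x z ∨ lt i0 z x := by
    rcases (by haveI := hlt i0; exact trichotomous_of (lt i0) x y : lt i0 x y ∨ x = y ∨ lt i0 y x) with h1 | h1 | h1
    · exact Or.inl ((hlt i0).trans _ _ _ h1 ((hyz i0).mpr ((hagree i0 hi0j).mp h1)))
    · exact absurd h1 hxy
    · have h2 : lt i0 z y := aux_not_lt lt hlt i0 hyzne
        (fun h5 => aux_asymm lt hlt i0 h1 ((hagree i0 hi0j).mpr ((hyz i0).mp h5)))
      exact Or.inr ((hlt i0).trans _ _ _ h2 h1)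
  have hxz : x ≠ z := by
    intro heq
    rcases hor with h1 | h1 <;> rw [heq] at h1 <;> exact (hlt i0).irrefl z h1
  by_cases hc : lt j x z ↔ lt j x y
  · -- type (x,z) = type (x,y): get E x z, contradiction
    have hsame : ∀ i, lt i x z ↔ lt i x y := by
      intro i
      by_cases hij : i = j
      · subst hij; exact hc
      · exact hxz_agree i hij
    obtain ⟨g2, hg2, hg2x, hg2z⟩ := aux_pair lt hlt hhom hxz hxy hsame
    have hExz : E x z := by
      have := hEinv g2 hg2 x z
      rw [hg2x, hg2z] at this
      exact this.mpr hExy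
    exact hnEyz (hEe.trans (hEe.symm hExy) hExz)
  · by_cases hdis : lt j x y ↔ lt j u v
    · -- type (x,y) = type (u,v): direct contradiction
      have hsame : ∀ i, lt i x y ↔ lt i u v := by
        intro i
        by_cases hij : i = j
        · subst hij; exact hdis
        · exact hagree i hij
      obtain ⟨g2, hg2, hg2x, hg2y⟩ := aux_pair lt hlt hhom hxy huv hsame
      have := hEinv g2 hg2 x y
      rw [hg2x, hg2y] at this
      exact hnEuv (this.mp hExy)
    · -- type (x,z) = type (u,v): get F x z, contradiction
      have hsame : ∀ i, lt i x z ↔ lt i u v := by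
        intro i
        by_cases hij : i = j
        · subst hij; tauto
        · exact (hxz_agree i hij).trans (hagree i hij)
      obtain ⟨g2, hg2, hg2x, hg2z⟩ := aux_pair lt hlt hhom hxz huv hsame
      have hFxz : F x z := by
        have := hFinv g2 hg2 x z
        rw [hg2x, hg2z] at this
        exact this.mpr hFuv
      exact hnFxy (hFe.trans hFxz (hFe.symm hFyz))

/-- an ultrahomogeneous 3-dimensional permutation structure has
no incomparable automorphism-invariant equivalence relations. -/
theorem stmt_18 {M : Type*} (lt : Fin 3 → M → M → Prop)
    (hlt : ∀ i, IsStrictTotalOrder M (lt i))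
    (hhom : Ultrahomog lt)
    (E F : M → M → Prop) (hEe : Equivalence E) (hFe : Equivalence F)
    (hEinv : ∀ g : M ≃ M, (∀ x y i, lt i x y ↔ lt i (g x) (g y)) →
      ∀ x y, E x y ↔ E (g x) (g y))
    (hFinv : ∀ g : M ≃ M, (∀ x y i, lt i x y ↔ lt i (g x) (g y)) →
      ∀ x y, F x y ↔ F (g x) (g y)) :
    (∀ x y, E x y → F x y) ∨ (∀ x y, F x y → E x y) := by
  classical
  by_contra hcon
  push_neg at hcon
  obtain ⟨⟨x, y, hExy, hnFxy⟩, ⟨u, v, hFuv, hnEuv⟩⟩ := hcon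
  have hxy : x ≠ y := by rintro rfl; exact hnFxy (hFe.refl x)
  have huv : u ≠ v := by rintro rfl; exact hnEuv (hEe.refl u)
  have hvu : v ≠ u := huv.symm
  have hFvu : F v u := hFe.symm hFuv
  have hnEvu : ¬ E v u := fun h => hnEuv (hEe.symm h)
  have hflip : ∀ i, lt i v u ↔ ¬ lt i u v := by
    intro i
    constructor
    · exact fun h1 h2 => aux_asymm lt hlt i h2 h1
    · exact fun h1 => aux_not_lt lt hlt i huv h1
  by_cases h0 : lt 0 x y ↔ lt 0 u v <;>
  by_cases h1 : lt 1 x y ↔ lt 1 u v <;>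
  by_cases h2 : lt 2 x y ↔ lt 2 u v
  · refine aux_core lt hlt hhom E F hEe hFe hEinv hFinv hxy huv hExy hnFxy hFuv hnEuv 0 ?_
    intro i hi
    fin_cases i
    · simp at hi
    · show lt 1 x y ↔ lt 1 u v; exact h1
    · show lt 2 x y ↔ lt 2 u v; exact h2
  · refine aux_core lt hlt hhom E F hEe hFe hEinv hFinv hxy huv hExy hnFxy hFuv hnEuv 2 ?_
    intro i hi
    fin_cases i
    · show lt 0 x y ↔ lt 0 u v; exact h0
    · show lt 1 x y ↔ lt 1 u v; exact h1
    · simp at hi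
  · refine aux_core lt hlt hhom E F hEe hFe hEinv hFinv hxy huv hExy hnFxy hFuv hnEuv 1 ?_
    intro i hi
    fin_cases i
    · show lt 0 x y ↔ lt 0 u v; exact h0
    · simp at hi
    · show lt 2 x y ↔ lt 2 u v; exact h2
  · refine aux_core lt hlt hhom E F hEe hFe hEinv hFinv hxy hvu hExy hnFxy hFvu hnEvu 0 ?_
    intro i hi
    fin_cases i
    · simp at hi
    · show lt 1 x y ↔ lt 1 v u; rw [hflip]; tauto
    · show lt 2 x y ↔ lt 2 v u; rw [hflip]; tauto
  · refine aux_core lt hlt hhom E F hEe hFe hEinv hFinv hxy huv hExy hnFxy hFuv hnEuv 0 ?_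
    intro i hi
    fin_cases i
    · simp at hi
    · show lt 1 x y ↔ lt 1 u v; exact h1
    · show lt 2 x y ↔ lt 2 u v; exact h2
  · refine aux_core lt hlt hhom E F hEe hFe hEinv hFinv hxy hvu hExy hnFxy hFvu hnEvu 1 ?_
    intro i hi
    fin_cases i
    · show lt 0 x y ↔ lt 0 v u; rw [hflip]; tauto
    · simp at hi
    · show lt 2 x y ↔ lt 2 v u; rw [hflip]; tauto
  · refine aux_core lt hlt hhom E F hEe hFe hEinv hFinv hxy hvu hExy hnFxy hFvu hnEvu 2 ?_
    intro i hi
    fin_cases i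
    · show lt 0 x y ↔ lt 0 v u; rw [hflip]; tauto
    · show lt 1 x y ↔ lt 1 v u; rw [hflip]; tauto
    · simp at hi
  · refine aux_core lt hlt hhom E F hEe hFe hEinv hFinv hxy hvu hExy hnFxy hFvu hnEvu 0 ?_
    intro i hi
    fin_cases i
    · simp at hi
    · show lt 1 x y ↔ lt 1 v u; rw [hflip]; tauto
    · show lt 2 x y ↔ lt 2 v u; rw [hflip]; tauto
end

section
/- Let n ≥ 1 and let M be a set equipped with n strict linear orders <₁,…,<ₙ that is ultrahomogeneous. Let E be an equivalence relation on M invariant under every automorphism of M, and let C and C' be two distinct E-classes. Then for every v ∈ Bool^n it is impossible that there exist a ∈ C and b' ∈ C' with pattern(a,b') = v and also a' ∈ C' and b ∈ C with pattern(a',b) = v. -/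
/-- The pattern (2-type) of an ordered pair of distinct points. -/
def Pattern {n : ℕ} {M : Type*} (lt : Fin n → M → M → Prop) (x y : M)
    (v : Fin n → Bool) : Prop :=
  x ≠ y ∧ ∀ i, lt i x y ↔ v i = true

private lemma lt_flip {n : ℕ} {M : Type*} {lt : Fin n → M → M → Prop}
    (hlt : ∀ i, IsStrictTotalOrder M (lt i)) (i : Fin n) {x y : M} (h : x ≠ y) :
    lt i y x ↔ ¬ lt i x y := by
  constructor
  · intro h1 h2
    exact (hlt i).irrefl x ((hlt i).trans _ _ _ h2 h1)
  · intro h1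
    rcases @trichotomous_of _ (lt i) (hlt i).toTrichotomous x y with h2 | h2 | h2
    · exact absurd h2 h1
    · exact absurd h2 h
    · exact h2

/-- for distinct classes `C = c/E`, `C' = c'/E` of an
automorphism-invariant equivalence relation on an ultrahomogeneous
`n`-dimensional permutation structure, no 2-type `v` is realized both in
`C × C'` and in `C' × C`. -/
theorem stmt_19 {n : ℕ} (hn : 1 ≤ n) {M : Type*} (lt : Fin n → M → M → Prop)
    (hlt : ∀ i, IsStrictTotalOrder M (lt i))
    (hhom : Ultrahomog lt)
    (E : M → M → Prop) (hEe : Equivalence E)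
    (hEinv : ∀ g : M ≃ M, (∀ x y i, lt i x y ↔ lt i (g x) (g y)) →
      ∀ x y, E x y ↔ E (g x) (g y))
    (c c' : M) (hcc' : ¬ E c c') (v : Fin n → Bool) :
    ¬ ((∃ a b', E c a ∧ E c' b' ∧ Pattern lt a b' v) ∧
       (∃ a' b, E c' a' ∧ E c b ∧ Pattern lt a' b v)) := by
  classical
  rintro ⟨⟨a, b', hca, hc'b', hab', hvab'⟩, ⟨a', b, hc'a', hcb, ha'b, hva'b⟩⟩
  -- `b` and `b'` are in different classes, hence distinct.
  have hbb'E : ¬ E b b' := fun h => hcc' (hEe.trans hcb (hEe.trans h (hEe.symm hc'b')))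
  have hbb' : b ≠ b' := fun h => hbb'E (h ▸ hEe.refl b)
  -- First automorphism: send a ↦ a', b' ↦ b.
  obtain ⟨g, gpres, gfix⟩ :=
    hhom {a, b'} ((Set.finite_singleton b').insert a) (fun x => if x = a then a' else b)
      (by
        intro x hx y hy i
        simp only [Set.mem_insert_iff, Set.mem_singleton_iff] at hx hy
        rcases hx with hx | hx <;> rcases hy with hy | hy <;> rw [hx, hy] <;>
          simp only [eq_self_iff_true, if_true, if_neg (Ne.symm hab' : ¬ (b' = a))]
        · exact ⟨fun h => absurd h ((hlt i).irrefl a), fun h => absurd h ((hlt i).irrefl a')⟩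
        · rw [hvab' i, hva'b i]
        · rw [lt_flip hlt i hab', lt_flip hlt i ha'b, hvab' i, hva'b i]
        · exact ⟨fun h => absurd h ((hlt i).irrefl b'), fun h => absurd h ((hlt i).irrefl b)⟩)
  have hga : g a = a' := by
    have := gfix a (by left; rfl); simpa using this
  have hgb' : g b' = b := by
    have := gfix b' (by right; rfl)
    rwa [if_neg (Ne.symm hab' : ¬ (b' = a))] at this
  -- key facts about g b
  have key : ∀ i, lt i b' b ↔ lt i b (g b) := by
    intro i; have := gpres b' b i; rwa [hgb'] at this
  have key2 : ∀ i, lt i b b' ↔ lt i (g b) b := by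
    intro i; have := gpres b b' i; rwa [hgb'] at this
  have hb'gb : ∀ i, lt i b' (g b) ↔ lt i b' b := by
    intro i
    constructor
    · intro h
      rcases @trichotomous_of _ (lt i) (hlt i).toTrichotomous b' b with h2 | h2 | h2
      · exact h2
      · exact absurd h2.symm hbb'
      · have h3 : lt i b' b := (hlt i).trans _ _ _ h ((key2 i).mp h2)
        exact absurd ((hlt i).trans _ _ _ h3 h2) ((hlt i).irrefl b')
    · intro h
      exact (hlt i).trans _ _ _ h ((key i).mp h)
  -- b' ≠ g b
  have hne : b' ≠ g b := by
    intro h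
    have i0 : Fin n := ⟨0, hn⟩
    rcases @trichotomous_of _ (lt i0) (hlt i0).toTrichotomous b' b with h2 | h2 | h2
    · have := (hb'gb i0).mpr h2
      rw [← h] at this
      exact (hlt i0).irrefl b' this
    · exact hbb' h2.symm
    · have := (key2 i0).mp h2
      rw [← h] at this
      exact (hlt i0).irrefl b ((hlt i0).trans _ _ _ h2 this)
  have hgbb' : ∀ i, lt i (g b) b' ↔ lt i b b' := by
    intro i
    rw [lt_flip hlt i hne, hb'gb i, ← lt_flip hlt i (Ne.symm hbb')]
  -- Second automorphism: fix b', send b ↦ g b.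
  obtain ⟨h, hpres, hfix⟩ :=
    hhom {b', b} ((Set.finite_singleton b).insert b') (fun x => if x = b' then b' else g b)
      (by
        intro x hx y hy i
        simp only [Set.mem_insert_iff, Set.mem_singleton_iff] at hx hy
        rcases hx with hx | hx <;> rcases hy with hy | hy <;> rw [hx, hy] <;>
          simp only [eq_self_iff_true, if_true, if_neg (hbb' : ¬ (b = b'))]
        · exact (hb'gb i).symm
        · exact (hgbb' i).symm
        · exact gpres b b i
        )
  have hhb' : h b' = b' := by
    have := hfix b' (by left; rfl); simpa using this
  have hhb : h b = g b := by
    have := hfix b (by right; rfl)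
    rwa [if_neg (hbb' : ¬ (b = b'))] at this
  -- Transfer E along h: E b' b ↔ E b' (g b), and the latter holds.
  have hiff : E b' b ↔ E b' (g b) := by
    have := hEinv h hpres b' b
    rwa [hhb', hhb] at this
  have h1 : E (g c) a' := by
    have := (hEinv g gpres c a).mp hca
    rwa [hga] at this
  have h2 : E (g c) c' := hEe.trans h1 (hEe.symm hc'a')
  have h3 : E (g c) (g b) := (hEinv g gpres c b).mp hcb
  have h4 : E c' (g b) := hEe.trans (hEe.symm h2) h3
  have h5 : E b' (g b) := hEe.trans (hEe.symm hc'b') h4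
  exact hbb'E (hEe.symm (hiff.mpr h5))
end
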